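/- arXiv:1111.0017 — 4 statements merged into one kernel-verified Lean document; each statement's English description precedes it below -/
import Mathlib

section
/- Let R be a commutative ring, d a natural number, λ₁,…,λ_d ∈ R, and f = a₀ + a₁X + a₂X² + ⋯ ∈ R[[X]]. With C := ∏_{i=1}^d (1 − λᵢX) and C′ its formal derivative, one has ∑_{i=1}^d f(λᵢX) = d·a₀ + f ⊙ (−X·C′·C⁻¹), where f(λX) denotes the rescaled series ∑ₙ aₙλⁿXⁿ and ⊙ denotes the Hadamard product. -/
open PowerSeries

/-- The Hadamard product of two formal power series:
`(∑ aₙ Xⁿ) ⊙ (∑ bₙ Xⁿ) := ∑ aₙ bₙ Xⁿ`. -/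
noncomputable def hadamard {R : Type*} [CommRing R] (f g : PowerSeries R) : PowerSeries R :=
  PowerSeries.mk fun n => PowerSeries.coeff n f * PowerSeries.coeff n g

section Aux
variable {R : Type*} [CommRing R]

/-- geometric series for `1 - a X` -/
lemma geom_mul (a : R) :
    (PowerSeries.mk fun n => a ^ n) * (1 - PowerSeries.C a * PowerSeries.X) = 1 := by
  ext n
  rw [mul_sub, mul_one]
  cases n with
  | zero => simp
  | succ n =>
    rw [map_sub, ← mul_assoc, mul_comm (PowerSeries.mk fun n => a ^ n) (PowerSeries.C a),
      mul_assoc, PowerSeries.coeff_C_mul, PowerSeries.coeff_succ_mul_X]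
    simp [pow_succ, mul_comm]

lemma g_mul (a : R) :
    ((PowerSeries.mk fun n => a ^ n) - 1) * (1 - PowerSeries.C a * PowerSeries.X)
      = PowerSeries.C a * PowerSeries.X := by
  rw [sub_mul, geom_mul, one_mul]; ring

lemma deriv_one_sub (a : R) :
    derivativeFun (1 - PowerSeries.C a * PowerSeries.X) = - PowerSeries.C a := by
  show d⁄dX R (1 - PowerSeries.C a * PowerSeries.X) = _
  rw [map_sub, Derivation.map_one_eq_zero, Derivation.leibniz, derivative_X, derivative_C]
  simp

lemma key (d : ℕ) (lam : Fin d → R) (s : Finset (Fin d)) :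
    (-PowerSeries.X) * derivativeFun (∏ i ∈ s, (1 - PowerSeries.C (lam i) * PowerSeries.X))
      = (∑ i ∈ s, ((PowerSeries.mk fun n => (lam i) ^ n) - 1)) *
        ∏ i ∈ s, (1 - PowerSeries.C (lam i) * PowerSeries.X) := by
  induction s using Finset.induction_on with
  | empty => show (-PowerSeries.X) * d⁄dX R 1 = _; simp
  | insert a s hni ih =>
    rw [Finset.prod_insert hni, Finset.sum_insert hni,
      derivativeFun_mul, deriv_one_sub, smul_eq_mul, smul_eq_mul]
    linear_combination (1 - PowerSeries.C (lam a) * PowerSeries.X) * ih +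
      (∏ i ∈ s, (1 - PowerSeries.C (lam i) * PowerSeries.X)) * g_mul (lam a) -
      2 * (∏ i ∈ s, (1 - PowerSeries.C (lam i) * PowerSeries.X)) * geom_mul (lam a)

end Aux

/-- Let `R` be a commutative ring, `d : ℕ`, `λ₁, …, λ_d ∈ R` and
`f = a₀ + a₁X + ⋯ ∈ R⟦X⟧`.  With `C := ∏ i, (1 - λᵢ X)` (a unit, with inverse `Cinv`)
and `C'` its formal derivative, one has
`∑ i, f(λᵢ X) = d • a₀ + f ⊙ (-X * C' * C⁻¹)`,
where `f(λX)` is the rescaled series `∑ aₙ λⁿ Xⁿ` and `⊙` is the Hadamard product. -/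
theorem statement1 (R : Type*) [CommRing R] (d : ℕ) (lam : Fin d → R)
    (f C Cinv : PowerSeries R)
    (hC : C = ∏ i : Fin d, (1 - PowerSeries.C (lam i) * PowerSeries.X))
    (hCinv : C * Cinv = 1) :
    ∑ i : Fin d, PowerSeries.rescale (lam i) f =
      d • PowerSeries.C (PowerSeries.constantCoeff f) +
        hadamard f (-PowerSeries.X * derivativeFun C * Cinv) := by
  have h := key d lam Finset.univ
  rw [← hC] at h
  have hB : -PowerSeries.X * derivativeFun C * Cinv
      = ∑ i : Fin d, ((PowerSeries.mk fun n => lam i ^ n) - 1) := by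
    rw [h, mul_assoc, hCinv, mul_one]
  rw [hB]
  ext n
  rw [map_add, map_sum]
  simp only [hadamard, PowerSeries.coeff_mk, map_sum, map_sub, PowerSeries.coeff_rescale]
  cases n with
  | zero =>
    simp [PowerSeries.coeff_zero_eq_constantCoeff, Finset.mul_sum]
  | succ n =>
    have hd : (PowerSeries.coeff (n+1)) ((d : PowerSeries R)) = 0 := by
      rw [← map_natCast PowerSeries.C d, PowerSeries.coeff_C]; simp
    simp [PowerSeries.coeff_one, Finset.sum_mul, mul_comm, hd]
end

section
/- Let R be a commutative ℚ-algebra, d a natural number, λ₁,…,λ_d ∈ R, and f ∈ R[[X]] with constant coefficient 0, so that exp(f) := ∑_{n≥0} fⁿ/n! is a well-defined power series. With C := ∏_{i=1}^d (1 − λᵢX) and C′ its formal derivative, one has ∏_{i=1}^d (exp f)(λᵢX) = exp( f ⊙ (−X·C′·C⁻¹) ), where (exp f)(λX) denotes the rescaled series and ⊙ denotes the Hadamard product (note f ⊙ (−X·C′·C⁻¹) also has constant coefficient 0, so the right-hand exponential is defined). -/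
open PowerSeries

/-- The exponential `exp(f) = ∑_{n ≥ 0} fⁿ/n!` of a power series `f` over a commutative
`ℚ`-algebra.  When `f` has zero constant coefficient, `coeff k (f ^ n) = 0` for `n > k`,
so the (X-adically convergent) sum can be computed coefficientwise by the finite sum
`coeff k (exp f) = ∑_{n ≤ k} (1/n!) • coeff k (f ^ n)`, which is what we use as the
definition. -/
noncomputable def expPS {R : Type*} [CommRing R] [Algebra ℚ R] (f : PowerSeries R) :
    PowerSeries R :=
  PowerSeries.mk fun k =>
    ∑ n ∈ Finset.range (k + 1), (n.factorial : ℚ)⁻¹ • PowerSeries.coeff k (f ^ n)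

namespace Stmt2Aux

open Finset

variable {R : Type*} [CommRing R]

lemma coeff_pow_mul_pow_eq_zero {f g : PowerSeries R}
    (hf : constantCoeff f = 0) (hg : constantCoeff g = 0)
    {k m n : ℕ} (h : k < m + n) : coeff k (f ^ m * g ^ n) = 0 := by
  have hd : (X : PowerSeries R) ^ (m + n) ∣ f ^ m * g ^ n := by
    rw [pow_add]
    exact mul_dvd_mul (pow_dvd_pow_of_dvd (X_dvd_iff.mpr hf) m)
      (pow_dvd_pow_of_dvd (X_dvd_iff.mpr hg) n)
  exact X_pow_dvd_iff.mp hd k h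

lemma coeff_pow_eq_zero {f : PowerSeries R} (hf : constantCoeff f = 0)
    {k n : ℕ} (h : k < n) : coeff k (f ^ n) = 0 := by
  have := coeff_pow_mul_pow_eq_zero (g := f) hf hf (k := k) (m := n) (n := 0) (by omega)
  simpa using this

lemma one_sub_C_mul_X_inv (r : R) :
    (1 - PowerSeries.C r * X) * PowerSeries.mk (fun n => r ^ n) = 1 := by
  ext n
  rw [sub_mul, one_mul, map_sub]
  cases n with
  | zero => simp
  | succ m =>
    rw [mul_assoc, coeff_C_mul, coeff_succ_X_mul, coeff_mk, coeff_mk, coeff_one]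
    simp only [Nat.succ_ne_zero, if_false]
    ring

lemma derivativeFun_prod {ι : Type*} [DecidableEq ι] (s : Finset ι) (F : ι → PowerSeries R) :
    derivativeFun (∏ i ∈ s, F i)
      = ∑ i ∈ s, derivativeFun (F i) * ∏ j ∈ s.erase i, F j := by
  induction s using Finset.cons_induction with
  | empty => simpa using derivativeFun_one
  | cons a s ha ih =>
    rw [Finset.prod_cons, derivativeFun_mul, ih, Finset.sum_cons, Finset.erase_cons ha]
    rw [add_comm]
    congr 1
    · rw [smul_eq_mul, mul_comm]
    · rw [smul_eq_mul, Finset.mul_sum]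
      refine Finset.sum_congr rfl fun i hi => ?_
      rw [Finset.erase_cons_of_ne ha (fun h => ha (h ▸ hi)), Finset.prod_cons]
      ring

lemma triangle_eq_square {M : Type*} [AddCommMonoid M] (k : ℕ) (F : ℕ → ℕ → M)
    (hF : ∀ m n, k < m + n → F m n = 0) :
    ∑ N ∈ range (k+1), ∑ m ∈ range (N+1), F m (N - m)
      = ∑ m ∈ range (k+1), ∑ n ∈ range (k+1), F m n := by
  have h1 : ∀ N ∈ range (k+1), ∑ m ∈ range (N+1), F m (N-m)
      = ∑ p ∈ Finset.HasAntidiagonal.antidiagonal N, F p.1 p.2 := fun N _ =>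
    (Finset.Nat.sum_antidiagonal_eq_sum_range_succ_mk (fun p => F p.1 p.2) N).symm
  rw [Finset.sum_congr rfl h1, ← Finset.sum_biUnion, ← Finset.sum_product']
  · apply Finset.sum_subset
    · intro p hp
      simp only [Finset.mem_biUnion, Finset.mem_range, Finset.HasAntidiagonal.mem_antidiagonal] at hp
      obtain ⟨N, hN, hpN⟩ := hp
      simp only [Finset.mem_product, Finset.mem_range]
      omega
    · intro p hp hnp
      apply hF
      by_contra h
      push_neg at h
      exact hnp (Finset.mem_biUnion.mpr ⟨p.1 + p.2, Finset.mem_range.mpr (by omega),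
        Finset.HasAntidiagonal.mem_antidiagonal.mpr rfl⟩)
  · intro a ha b hb hab
    simp only [Finset.disjoint_left, Finset.HasAntidiagonal.mem_antidiagonal]
    intro p hp hq
    exact hab (hp.symm.trans hq)

variable [Algebra ℚ R]

lemma expPS_zero : expPS (0 : PowerSeries R) = 1 := by
  ext k
  simp only [expPS, coeff_mk]
  rw [Finset.sum_eq_single 0]
  · simp
  · intro n _ hn; rw [zero_pow hn, map_zero, smul_zero]
  · simp

lemma coeff_expPS_of_le {f : PowerSeries R} (hf : constantCoeff f = 0) {k N : ℕ}
    (h : k + 1 ≤ N) :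
    coeff k (expPS f)
      = ∑ n ∈ Finset.range N, (n.factorial : ℚ)⁻¹ • coeff k (f ^ n) := by
  rw [expPS, coeff_mk]
  refine Finset.sum_subset (Finset.range_subset_range.mpr h) fun n _ hn => ?_
  rw [coeff_pow_eq_zero hf (by simp only [Finset.mem_range] at hn ⊢; omega), smul_zero]

lemma expPS_mul {f g : PowerSeries R}
    (hf : constantCoeff f = 0) (hg : constantCoeff g = 0) :
    expPS (f + g) = expPS f * expPS g := by
  ext k
  rw [coeff_mul]
  have hR : ∀ p ∈ Finset.HasAntidiagonal.antidiagonal k,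
      coeff p.1 (expPS f) * coeff p.2 (expPS g)
        = ∑ m ∈ range (k+1), ∑ n ∈ range (k+1),
            ((m.factorial : ℚ)⁻¹ * (n.factorial : ℚ)⁻¹) •
              (coeff p.1 (f ^ m) * coeff p.2 (g ^ n)) := by
    intro p hp
    have hp' := Finset.HasAntidiagonal.mem_antidiagonal.mp hp
    rw [coeff_expPS_of_le hf (N := k+1) (by omega), coeff_expPS_of_le hg (N := k+1) (by omega),
      Finset.sum_mul_sum]
    refine Finset.sum_congr rfl fun m _ => Finset.sum_congr rfl fun n _ => ?_
    rw [smul_mul_smul_comm]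
  rw [Finset.sum_congr rfl hR, Finset.sum_comm]
  have : ∀ m ∈ range (k+1),
      ∑ p ∈ Finset.HasAntidiagonal.antidiagonal k, ∑ n ∈ range (k+1),
          ((m.factorial : ℚ)⁻¹ * (n.factorial : ℚ)⁻¹) •
            (coeff p.1 (f ^ m) * coeff p.2 (g ^ n))
        = ∑ n ∈ range (k+1),
            ((m.factorial * n.factorial : ℚ))⁻¹ • coeff k (f ^ m * g ^ n) := by
    intro m _
    rw [Finset.sum_comm]
    refine Finset.sum_congr rfl fun n _ => ?_
    rw [← Finset.smul_sum, ← coeff_mul, mul_inv]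
  rw [Finset.sum_congr rfl this]
  have hL : ∀ N ∈ range (k+1), (N.factorial : ℚ)⁻¹ • coeff k ((f + g) ^ N)
      = ∑ m ∈ range (N+1),
          ((m.factorial * (N - m).factorial : ℚ))⁻¹ • coeff k (f ^ m * g ^ (N - m)) := by
    intro N _
    rw [add_pow, map_sum, Finset.smul_sum]
    refine Finset.sum_congr rfl fun m hm => ?_
    have hmN : m ≤ N := by simp only [Finset.mem_range] at hm; omega
    have : ((N.choose m : R⟦X⟧)) = PowerSeries.C ((N.choose m : R)) := by
      rw [map_natCast]
    have h2 : ((N.choose m : R)) = algebraMap ℚ R ((N.choose m : ℚ)) := by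
      rw [map_natCast]
    rw [this, coeff_mul_C, h2, mul_comm, ← Algebra.smul_def, smul_smul]
    congr 1
    have hm0 : ((m.factorial : ℚ)) ≠ 0 := Nat.cast_ne_zero.mpr (Nat.factorial_ne_zero _)
    have hNm0 : (((N - m).factorial : ℚ)) ≠ 0 := Nat.cast_ne_zero.mpr (Nat.factorial_ne_zero _)
    have hN0 : ((N.factorial : ℚ)) ≠ 0 := Nat.cast_ne_zero.mpr (Nat.factorial_ne_zero _)
    rw [Nat.cast_choose ℚ hmN]
    field_simp
  rw [expPS, coeff_mk, Finset.sum_congr rfl hL]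
  exact triangle_eq_square k
    (fun m n => ((m.factorial * n.factorial : ℚ))⁻¹ • coeff k (f ^ m * g ^ n))
    (fun m n h => by rw [coeff_pow_mul_pow_eq_zero hf hg h, smul_zero])

lemma expPS_sum {ι : Type*} (s : Finset ι) (F : ι → PowerSeries R)
    (h : ∀ i ∈ s, constantCoeff (F i) = 0) :
    expPS (∑ i ∈ s, F i) = ∏ i ∈ s, expPS (F i) := by
  induction s using Finset.cons_induction with
  | empty => simpa using expPS_zero
  | cons a s ha ih =>
    have hs : constantCoeff (∑ i ∈ s, F i) = 0 := by
      rw [map_sum]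
      exact Finset.sum_eq_zero fun i hi => h i (Finset.mem_cons_of_mem hi)
    rw [Finset.sum_cons, Finset.prod_cons, expPS_mul (h a (Finset.mem_cons_self a s)) hs,
      ih (fun i hi => h i (Finset.mem_cons_of_mem hi))]

lemma rescale_expPS (a : R) (f : PowerSeries R) :
    rescale a (expPS f) = expPS (rescale a f) := by
  ext k
  rw [coeff_rescale, expPS, expPS, coeff_mk, coeff_mk, Finset.mul_sum]
  refine Finset.sum_congr rfl fun n _ => ?_
  rw [← map_pow, coeff_rescale, mul_smul_comm]

end Stmt2Aux

/-- Let `R` be a commutative `ℚ`-algebra, `d : ℕ`, `λ₁, …, λ_d ∈ R`,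
and `f ∈ R⟦X⟧` with constant coefficient `0`, so that `exp f` is defined.  With
`C := ∏ i, (1 - λᵢ X)` (a unit, with inverse `Cinv`) and `C'` its formal derivative,
`∏ i, (exp f)(λᵢ X) = exp (f ⊙ (-X * C' * C⁻¹))`,
where `(exp f)(λX)` denotes the rescaled series and `⊙` the Hadamard product. -/
theorem statement2 (R : Type*) [CommRing R] [Algebra ℚ R] (d : ℕ) (lam : Fin d → R)
    (f C Cinv : PowerSeries R)
    (hf : PowerSeries.constantCoeff f = 0)
    (hC : C = ∏ i : Fin d, (1 - PowerSeries.C (lam i) * PowerSeries.X))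
    (hCinv : C * Cinv = 1) :
    ∏ i : Fin d, PowerSeries.rescale (lam i) (expPS f) =
      expPS (hadamard f (-PowerSeries.X * derivativeFun C * Cinv)) := by
  classical
  have h0 : ∀ i : Fin d, PowerSeries.constantCoeff (PowerSeries.rescale (lam i) f) = 0 := by
    intro i
    rw [← coeff_zero_eq_constantCoeff_apply, coeff_rescale, pow_zero, one_mul,
      coeff_zero_eq_constantCoeff_apply, hf]
  have h1 : ∏ i : Fin d, PowerSeries.rescale (lam i) (expPS f)
      = expPS (∑ i : Fin d, PowerSeries.rescale (lam i) f) := by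
    rw [Stmt2Aux.expPS_sum _ _ (fun i _ => h0 i)]
    exact Finset.prod_congr rfl fun i _ => Stmt2Aux.rescale_expPS _ _
  rw [h1]
  -- the right factor of the Hadamard product, identified
  set g : Fin d → PowerSeries R :=
    fun i => PowerSeries.C (lam i) * PowerSeries.X * PowerSeries.mk (fun n => lam i ^ n)
    with hg
  have hE : -PowerSeries.X * derivativeFun C * Cinv = ∑ i : Fin d, g i := by
    have hcan : ∀ a b : PowerSeries R, C * a = C * b → a = b := by
      intro a b h
      calc a = (C * Cinv) * a := by rw [hCinv, one_mul]
        _ = Cinv * (C * a) := by ring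
        _ = Cinv * (C * b) := by rw [h]
        _ = (C * Cinv) * b := by ring
        _ = b := by rw [hCinv, one_mul]
    apply hcan
    have hC' : derivativeFun C = ∑ i : Fin d, derivativeFun
        (1 - PowerSeries.C (lam i) * PowerSeries.X) *
        ∏ j ∈ Finset.univ.erase i, (1 - PowerSeries.C (lam j) * PowerSeries.X) := by
      rw [hC, Stmt2Aux.derivativeFun_prod]
    have hder : ∀ i : Fin d, derivativeFun (1 - PowerSeries.C (lam i) * PowerSeries.X)
        = - PowerSeries.C (lam i) := by
      intro i
      have : (1 - PowerSeries.C (lam i) * PowerSeries.X : PowerSeries R)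
          = 1 + (-(lam i)) • PowerSeries.X := by
        rw [smul_eq_C_mul, map_neg]; ring
      rw [this, derivativeFun_add, derivativeFun_one, derivativeFun_smul, zero_add]
      rw [show derivativeFun (PowerSeries.X : PowerSeries R) = 1 from derivative_X,
        smul_eq_C_mul, mul_one, map_neg]
    calc C * (-PowerSeries.X * derivativeFun C * Cinv)
        = (-PowerSeries.X * derivativeFun C) * (C * Cinv) := by ring
      _ = -PowerSeries.X * derivativeFun C := by rw [hCinv, mul_one]
      _ = ∑ i : Fin d, PowerSeries.C (lam i) * PowerSeries.X *
            ∏ j ∈ Finset.univ.erase i, (1 - PowerSeries.C (lam j) * PowerSeries.X) := by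
          rw [hC', Finset.mul_sum]
          refine Finset.sum_congr rfl fun i _ => ?_
          rw [hder i]; ring
      _ = C * ∑ i : Fin d, g i := by
          rw [Finset.mul_sum]
          refine Finset.sum_congr rfl fun i _ => ?_
          rw [hg]
          calc PowerSeries.C (lam i) * PowerSeries.X *
                ∏ j ∈ Finset.univ.erase i, (1 - PowerSeries.C (lam j) * PowerSeries.X)
              = ((1 - PowerSeries.C (lam i) * PowerSeries.X) *
                  PowerSeries.mk (fun n => lam i ^ n)) *
                (PowerSeries.C (lam i) * PowerSeries.X *
                  ∏ j ∈ Finset.univ.erase i, (1 - PowerSeries.C (lam j) * PowerSeries.X)) := by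
                rw [Stmt2Aux.one_sub_C_mul_X_inv, one_mul]
            _ = ((1 - PowerSeries.C (lam i) * PowerSeries.X) *
                  ∏ j ∈ Finset.univ.erase i,
                    (1 - PowerSeries.C (lam j) * PowerSeries.X)) *
                (PowerSeries.C (lam i) * PowerSeries.X *
                  PowerSeries.mk (fun n => lam i ^ n)) := by ring
            _ = C * (PowerSeries.C (lam i) * PowerSeries.X *
                  PowerSeries.mk (fun n => lam i ^ n)) := by
                rw [hC, ← Finset.mul_prod_erase Finset.univ
                  (fun j => 1 - PowerSeries.C (lam j) * PowerSeries.X) (Finset.mem_univ i)]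
  have hcg : ∀ (i : Fin d) (n : ℕ),
      PowerSeries.coeff n (g i) = if n = 0 then 0 else lam i ^ n := by
    intro i n
    show PowerSeries.coeff n (PowerSeries.C (lam i) * PowerSeries.X *
      PowerSeries.mk (fun j => lam i ^ j)) = _
    cases n with
    | zero =>
      simp [mul_assoc]
    | succ m =>
      rw [mul_assoc, coeff_C_mul, coeff_succ_X_mul, coeff_mk]
      simp only [Nat.succ_ne_zero, if_false]
      ring
  have key : (∑ i : Fin d, PowerSeries.rescale (lam i) f)
      = hadamard f (-PowerSeries.X * derivativeFun C * Cinv) := by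
    ext n
    rw [map_sum, hadamard, coeff_mk, hE, map_sum]
    simp only [hcg]
    cases n with
    | zero =>
      simp [coeff_zero_eq_constantCoeff_apply, hf]
    | succ m =>
      simp only [Nat.succ_ne_zero, if_false, Finset.mul_sum]
      refine Finset.sum_congr rfl fun i _ => ?_
      rw [coeff_rescale, mul_comm]
  rw [key]
end

section
/- In the ring (ℚ[U])[[y]] of formal power series in y over the polynomial ring ℚ[U], define Q := 4 − y + (1+y)(yU − 3)·(1 + yU²)⁻¹ − U(1+y)²·((1 + yU²)⁻¹)². Then the coefficient of y⁰ in Q is 1 − U, the coefficient of y¹ is 2U³ + 3U² − U − 4, and for every integer n ≥ 2 the coefficient of yⁿ is −U((n+1)U − (n−2))(U−1)(U+1)²(−U²)^{n−2}. -/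
open PowerSeries Polynomial

/-- **the `D₅` series `Q`.** In `(ℚ[U])⟦y⟧`, the element `1 + y U²` has
constant coefficient `1`, hence is a unit; let `W` be its inverse.  Set
`Q := 4 - y + (1+y)(yU - 3)·W - U(1+y)²·W²`.
Then the coefficient of `y⁰` in `Q` is `1 - U`, the coefficient of `y¹` is
`2U³ + 3U² - U - 4`, and for every `n ≥ 2` the coefficient of `yⁿ` is
`-U((n+1)U - (n-2))(U-1)(U+1)²(-U²)^{n-2}`. -/
theorem statement3 (W : PowerSeries (Polynomial ℚ))
    (hW : (1 + PowerSeries.C ((Polynomial.X : Polynomial ℚ) ^ 2) *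
        PowerSeries.X) * W = 1) :
    letI U : Polynomial ℚ := Polynomial.X
    letI y : PowerSeries (Polynomial ℚ) := PowerSeries.X
    letI Q : PowerSeries (Polynomial ℚ) :=
      4 - y + (1 + y) * (y * PowerSeries.C U - 3) * W
        - PowerSeries.C U * (1 + y) ^ 2 * W ^ 2
    (PowerSeries.coeff 0 Q = 1 - U) ∧
    (PowerSeries.coeff 1 Q = 2 * U ^ 3 + 3 * U ^ 2 - U - 4) ∧
    (∀ n : ℕ, 2 ≤ n →
      PowerSeries.coeff n Q =
        -U * (((n : Polynomial ℚ) + 1) * U - ((n : Polynomial ℚ) - 2)) * (U - 1)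
          * (U + 1) ^ 2 * (-U ^ 2) ^ (n - 2)) := by
  -- coefficients of W
  have hw : ∀ n : ℕ, PowerSeries.coeff n W = (-(X : Polynomial ℚ) ^ 2) ^ n := by
    intro n
    induction n with
    | zero =>
      have := congrArg (PowerSeries.coeff 0) hW
      simpa [add_mul, mul_assoc] using this
    | succ n ih =>
      have := congrArg (PowerSeries.coeff (n + 1)) hW
      rw [add_mul, one_mul, mul_assoc, map_add, PowerSeries.coeff_C_mul,
        PowerSeries.coeff_succ_X_mul, ih] at this
      simp only [PowerSeries.coeff_one, Nat.succ_ne_zero, if_false] at this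
      have h2 : PowerSeries.coeff (n+1) W
          = -((X : Polynomial ℚ)^2 * (-(X : Polynomial ℚ)^2)^n) := by linear_combination this
      rw [h2, pow_succ]
      ring
  -- coefficients of W^2
  have hw2 : ∀ n : ℕ, PowerSeries.coeff n (W ^ 2)
      = ((n : Polynomial ℚ) + 1) * (-(X : Polynomial ℚ) ^ 2) ^ n := by
    intro n
    rw [sq, PowerSeries.coeff_mul, Finset.Nat.sum_antidiagonal_eq_sum_range_succ_mk]
    have : ∀ i ∈ Finset.range (n + 1),
        PowerSeries.coeff i W * PowerSeries.coeff (n - i) W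
          = (-(X : Polynomial ℚ) ^ 2) ^ n := by
      intro i hi
      rw [hw, hw, ← pow_add, Nat.add_sub_cancel' (Nat.lt_succ_iff.mp (Finset.mem_range.mp hi))]
    rw [Finset.sum_congr rfl this, Finset.sum_const, Finset.card_range, nsmul_eq_mul]
    push_cast
    ring
  have h3 : PowerSeries.C (3 : Polynomial ℚ) = 3 := by simp [map_ofNat]
  -- decompose Q
  have hQ : 4 - PowerSeries.X
        + (1 + PowerSeries.X) * (PowerSeries.X * PowerSeries.C (Polynomial.X : Polynomial ℚ) - 3) * W
        - PowerSeries.C (Polynomial.X : Polynomial ℚ) * (1 + PowerSeries.X) ^ 2 * W ^ 2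
      = 4 - PowerSeries.X - PowerSeries.C (3 : Polynomial ℚ) * W
        + PowerSeries.C (Polynomial.X : Polynomial ℚ) * (PowerSeries.X * W)
        - PowerSeries.C (3 : Polynomial ℚ) * (PowerSeries.X * W)
        + PowerSeries.C (Polynomial.X : Polynomial ℚ) * (PowerSeries.X ^ 2 * W)
        - PowerSeries.C (Polynomial.X : Polynomial ℚ) * W ^ 2
        - PowerSeries.C (2 * Polynomial.X : Polynomial ℚ) * (PowerSeries.X * W ^ 2)
        - PowerSeries.C (Polynomial.X : Polynomial ℚ) * (PowerSeries.X ^ 2 * W ^ 2) := by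
      rw [map_mul, h3]
      have h2' : PowerSeries.C (2 : Polynomial ℚ) = 2 := by simp [map_ofNat]
      rw [h2']
      ring
  rw [hQ]
  have c4 : ∀ n : ℕ, n ≠ 0 →
      PowerSeries.coeff n (4 : PowerSeries (Polynomial ℚ)) = 0 := by
    intro n hn
    have : (4 : PowerSeries (Polynomial ℚ)) = PowerSeries.C 4 := by simp [map_ofNat]
    rw [this, PowerSeries.coeff_C, if_neg hn]
  refine ⟨?_, ?_, ?_⟩
  · have hW0 : PowerSeries.constantCoeff W = 1 := by simpa using hw 0
    simp [PowerSeries.coeff_zero_eq_constantCoeff, hW0, map_ofNat]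
    ring
  · have s1 : ∀ f : PowerSeries (Polynomial ℚ),
        PowerSeries.coeff 1 (PowerSeries.X * f) = PowerSeries.coeff 0 f :=
      fun f => PowerSeries.coeff_succ_X_mul 0 f
    have s2 : ∀ f : PowerSeries (Polynomial ℚ),
        PowerSeries.coeff 1 (PowerSeries.X ^ 2 * f) = 0 := by
      intro f; rw [PowerSeries.coeff_X_pow_mul']; simp
    simp only [map_sub, map_add, PowerSeries.coeff_C_mul, s1, s2]
    rw [c4 1 one_ne_zero]
    simp only [PowerSeries.coeff_one_X, hw, hw2]
    push_cast
    ring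
  · rintro n hn
    obtain ⟨m, rfl⟩ : ∃ m, n = m + 2 := ⟨n - 2, by omega⟩
    have s1 : ∀ f : PowerSeries (Polynomial ℚ),
        PowerSeries.coeff (m + 2) (PowerSeries.X * f) = PowerSeries.coeff (m + 1) f :=
      fun f => PowerSeries.coeff_succ_X_mul (m + 1) f
    have s2 : ∀ f : PowerSeries (Polynomial ℚ),
        PowerSeries.coeff (m + 2) (PowerSeries.X ^ 2 * f) = PowerSeries.coeff m f :=
      fun f => PowerSeries.coeff_X_pow_mul f 2 m
    have eX : PowerSeries.coeff (m + 2) (PowerSeries.X : PowerSeries (Polynomial ℚ)) = 0 := by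
      rw [PowerSeries.coeff_X, if_neg (by omega)]
    simp only [map_sub, map_add, PowerSeries.coeff_C_mul, s1, s2]
    rw [c4 _ (by omega), eX]
    simp only [hw, hw2, Nat.add_sub_cancel]
    push_cast
    rw [pow_succ (-(X : Polynomial ℚ)^2) m, pow_succ (-(X : Polynomial ℚ)^2) (m+1),
      pow_succ (-(X : Polynomial ℚ)^2) m]
    ring
end

section
/- In ℚ[[H,L,y]] define D := (1 + y e^{−H})(1 + y e^{−H−L})³ · (1+y)⁻¹ · ((1 + y e^{−2H−2L})⁻¹)² · [H(H+L)³/((1 − e^{−H})(1 − e^{−H−L})³)] · (1 − e^{−2H−2L})², where the bracketed factor denotes u⁻¹v⁻³ for the units u, v with 1 − e^{−H} = H·u and 1 − e^{−(H+L)} = (H+L)·v. View D = ∑_{k≥0} g_k H^k as an element of A[[H]] with A := ℚ[[L,y]], and define π_*(D) := ∑_{k≥3} (−1)^{k−3}·binom(k−1,2)·g_k·L^{k−3} (a coefficientwise convergent sum in A, the k-th term being divisible by L^{k−3}). Then π_*(D) = 4 − y + (1+y)(yU − 3)(1 + yU²)⁻¹ − U(1+y)²((1 + yU²)⁻¹)²,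 where U := exp(−L) ∈ A. -/
noncomputable section

/-- `A := ℚ⟦L,y⟧`, with `L` and `y` the two variables. -/
abbrev Aq : Type := MvPowerSeries (Fin 2) ℚ

/-- `B := A⟦H⟧ ≅ ℚ⟦H,L,y⟧`. -/
abbrev Bq : Type := PowerSeries Aq

/-- The variable `L`. -/
def Lv : Aq := MvPowerSeries.X 0

/-- The variable `y`. -/
def yv : Aq := MvPowerSeries.X 1

/-- The variable `H`. -/
def Hb : Bq := PowerSeries.X

/-- `L` viewed in `B`. -/
def Lb : Bq := PowerSeries.C (R := Aq) Lv

/-- `y` viewed in `B`. -/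
def yb : Bq := PowerSeries.C (R := Aq) yv

/-- The exponential `exp f = ∑ fⁿ/n!` of `f ∈ A = ℚ⟦L,y⟧` with zero constant
coefficient; coefficientwise the (X-adically convergent) sum is finite, since
`coeff e (f ^ n) = 0` whenever `n` exceeds the total degree of the monomial `e`. -/
def expA (f : Aq) : Aq := fun e =>
  ∑ n ∈ Finset.range (e 0 + e 1 + 1),
    (n.factorial : ℚ)⁻¹ * MvPowerSeries.coeff (R := ℚ) e (f ^ n)

/-- The exponential `exp f = ∑ fⁿ/n!` of `f ∈ B = ℚ⟦H,L,y⟧` with zero constant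
coefficient, computed coefficientwise by a finite sum (the coefficient of
`Hᵏ Lᵃ yᵇ` in `f ^ n` vanishes for `n > k + a + b`). -/
def expB (f : Bq) : Bq :=
  PowerSeries.mk fun k => (fun e =>
    ∑ n ∈ Finset.range (k + e 0 + e 1 + 1),
      (n.factorial : ℚ)⁻¹ * MvPowerSeries.coeff (R := ℚ) e (PowerSeries.coeff (R := Aq) k (f ^ n)) : Aq)

/-- The pushforward `π_*` for the `ℙ³`-bundle `ℙ(𝒪⊕𝓛⊕𝓛⊕𝓛)`: writing
`f = ∑_k g_k Hᵏ` with `g_k ∈ A`, it is `∑_{k≥3} (-1)^{k-3} C(k-1,2) g_k L^{k-3}`,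
a coefficientwise convergent sum in `A` (the `k`-th term is divisible by `L^{k-3}`),
so that the coefficient of `Lᵃ yᵇ` is
`∑_{j=0}^{a} (-1)^j C(j+2,2) · (coefficient of L^{a-j} yᵇ in g_{j+3})`. -/
def pushD5 (f : Bq) : Aq := fun e =>
  ∑ k ∈ Finset.range (e 0 + 1),
    (-1 : ℚ) ^ k * (Nat.choose (k + 2) 2 : ℚ) *
      MvPowerSeries.coeff (R := ℚ) (Finsupp.single 0 (e 0 - k) + Finsupp.single 1 (e 1))
        (PowerSeries.coeff (R := Aq) (k + 3) f)

open Finsupp in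
lemma mon_eta (e : Fin 2 →₀ ℕ) :
    Finsupp.single (0 : Fin 2) (e 0) + Finsupp.single 1 (e 1) = e := by
  ext i
  fin_cases i <;> simp [Finsupp.single_apply]

abbrev cf (i b : ℕ) (f : Aq) : ℚ :=
  MvPowerSeries.coeff (R := ℚ) (Finsupp.single (0:Fin 2) i + Finsupp.single 1 b) f

@[simp] lemma mon_apply0 (i b : ℕ) :
    ((Finsupp.single (0:Fin 2) i + Finsupp.single 1 b : Fin 2 →₀ ℕ)) 0 = i := by
  simp [Finsupp.single_apply]

@[simp] lemma mon_apply1 (i b : ℕ) :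
    ((Finsupp.single (0:Fin 2) i + Finsupp.single 1 b : Fin 2 →₀ ℕ)) 1 = b := by
  simp [Finsupp.single_apply]

lemma single_le_mon (j i b : ℕ) :
    Finsupp.single (0:Fin 2) j ≤ Finsupp.single (0:Fin 2) i + Finsupp.single 1 b ↔ j ≤ i := by
  rw [Finsupp.le_iff]
  constructor
  · intro h
    rcases Nat.eq_zero_or_pos j with hj | hj
    · simp [hj]
    · have := h 0 (by simp [Finsupp.single_apply, hj.ne'])
      simpa [Finsupp.single_apply] using this
  · intro h s hs
    have : s = 0 := by
      by_contra hne
      simp [Finsupp.single_apply, Ne.symm hne] at hs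
    subst this
    simpa [Finsupp.single_apply] using h

lemma mon_sub (j i b : ℕ) (h : j ≤ i) :
    (Finsupp.single (0:Fin 2) i + Finsupp.single 1 b) - Finsupp.single (0:Fin 2) j
      = Finsupp.single (0:Fin 2) (i - j) + Finsupp.single 1 b := by
  ext s
  fin_cases s <;> simp [Finsupp.single_apply, Finsupp.tsub_apply]

lemma cf_Lpow_mul (i b j : ℕ) (f : Aq) :
    cf i b (Lv ^ j * f) = if j ≤ i then cf (i - j) b f else 0 := by
  unfold cf
  rw [Lv, MvPowerSeries.X_pow_eq, MvPowerSeries.coeff_monomial_mul]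
  by_cases h : j ≤ i
  · rw [if_pos ((single_le_mon j i b).2 h), if_pos h, one_mul, mon_sub j i b h]
  · rw [if_neg (fun hc => h ((single_le_mon j i b).1 hc)), if_neg h]

lemma cf_L_mul (i b : ℕ) (f : Aq) :
    cf i b (Lv * f) = if 1 ≤ i then cf (i - 1) b f else 0 := by
  simpa using cf_Lpow_mul i b 1 f

lemma Aq_ext {f g : Aq} (h : ∀ a b, cf a b f = cf a b g) : f = g := by
  ext e
  have := h (e 0) (e 1)
  unfold cf at this
  rwa [mon_eta e] at this

/-- "Evaluation at `H = -L`" of an element of `B = A⟦H⟧`. -/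
def evL (f : Bq) : Aq := fun e =>
  ∑ m ∈ Finset.range (e 0 + 1),
    (-1 : ℚ)^m * cf (e 0 - m) (e 1) (PowerSeries.coeff (R := Aq) m f)

/-- The quotient upon division of `f - evL f` by `H + L`. -/
def divHL (f : Bq) : Bq := PowerSeries.mk fun k => (fun e =>
  ∑ m ∈ Finset.range (e 0 + 1),
    (-1 : ℚ)^m * cf (e 0 - m) (e 1) (PowerSeries.coeff (R := Aq) (k + 1 + m) f) : Aq)

lemma coeff_evL (f : Bq) (e : Fin 2 →₀ ℕ) :
    MvPowerSeries.coeff (R := ℚ) e (evL f)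
      = ∑ m ∈ Finset.range (e 0 + 1),
          (-1 : ℚ)^m * cf (e 0 - m) (e 1) (PowerSeries.coeff (R := Aq) m f) := rfl

lemma coeff_divHL (f : Bq) (k : ℕ) (e : Fin 2 →₀ ℕ) :
    MvPowerSeries.coeff (R := ℚ) e (PowerSeries.coeff (R := Aq) k (divHL f))
      = ∑ m ∈ Finset.range (e 0 + 1),
          (-1 : ℚ)^m * cf (e 0 - m) (e 1) (PowerSeries.coeff (R := Aq) (k + 1 + m) f) := by
  rw [divHL]; erw [PowerSeries.coeff_mk]
  rfl

lemma tele (a b : ℕ) (c : ℕ → Aq) :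
    (∑ m ∈ Finset.range (a + 1), (-1:ℚ)^m * cf (a - m) b (c m))
      = cf a b (c 0)
        - (if 1 ≤ a then
            ∑ m ∈ Finset.range (a - 1 + 1), (-1:ℚ)^m * cf (a - 1 - m) b (c (m+1))
          else 0) := by
  rcases a with _ | a'
  · simp
  · rw [if_pos (by omega)]
    rw [Finset.sum_range_succ']
    have h1 : ∀ m ∈ Finset.range (a' + 1),
        (-1:ℚ)^(m+1) * cf (a' + 1 - (m+1)) b (c (m+1))
          = -((-1)^m * cf (a' + 1 - 1 - m) b (c (m+1))) := by
      intro m _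
      rw [Nat.succ_sub_succ, pow_succ]
      simp only [Nat.add_sub_cancel]
      ring
    rw [Finset.sum_congr rfl h1]
    rw [Finset.sum_neg_distrib]
    simp only [pow_zero, one_mul, Nat.sub_zero, Nat.add_sub_cancel]
    ring

lemma coeff_zero_HL_mul (g : Bq) :
    PowerSeries.coeff (R := Aq) 0 ((Hb + Lb) * g) = Lv * PowerSeries.coeff (R := Aq) 0 g := by
  rw [add_mul, map_add, Hb, Lb]
  rw [PowerSeries.coeff_zero_eq_constantCoeff, map_mul, map_mul]
  simp [PowerSeries.coeff_zero_eq_constantCoeff]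

lemma coeff_succ_HL_mul (g : Bq) (k : ℕ) :
    PowerSeries.coeff (R := Aq) (k+1) ((Hb + Lb) * g)
      = PowerSeries.coeff (R := Aq) k g + Lv * PowerSeries.coeff (R := Aq) (k+1) g := by
  rw [add_mul, map_add, Hb, Lb, PowerSeries.coeff_succ_X_mul, PowerSeries.coeff_C_mul]

/-- Division with remainder by `H + L` in `A⟦H⟧`. -/
theorem decompHL (f : Bq) :
    f = PowerSeries.C (R := Aq) (evL f) + (Hb + Lb) * divHL f := by
  refine PowerSeries.ext fun k => ?_
  rcases k with _ | k
  · rw [map_add, coeff_zero_HL_mul, PowerSeries.coeff_zero_eq_constantCoeff,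
      PowerSeries.constantCoeff_C]
    apply Aq_ext
    intro a b
    unfold cf
    rw [map_add, ← PowerSeries.coeff_zero_eq_constantCoeff]
    rw [coeff_evL]
    have hL := cf_L_mul a b (PowerSeries.coeff (R := Aq) 0 (divHL f))
    unfold cf at hL
    rw [hL]
    simp only [mon_apply0, mon_apply1]
    have ht := tele a b (fun m => PowerSeries.coeff (R := Aq) m f)
    unfold cf at ht
    rw [ht]
    rcases Nat.eq_zero_or_pos a with ha | ha
    · simp [ha]
    · have ha1 : 1 ≤ a := ha
      rw [if_pos ha1, if_pos ha1, coeff_divHL]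
      simp only [mon_apply0, mon_apply1]
      have : ∀ m ∈ Finset.range (a - 1 + 1),
          (-1:ℚ)^m * cf (a-1-m) b (PowerSeries.coeff (R := Aq) (0+1+m) f)
            = (-1:ℚ)^m * cf (a-1-m) b (PowerSeries.coeff (R := Aq) (m+1) f) := by
        intro m _
        have hx : 0+1+m = m+1 := by omega
        rw [hx]
      unfold cf at this
      rw [Finset.sum_congr rfl this]
      ring
  · rw [map_add, coeff_succ_HL_mul, PowerSeries.coeff_C, if_neg (Nat.succ_ne_zero k)]
    apply Aq_ext
    intro a b
    unfold cf
    rw [zero_add, map_add]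
    have hL := cf_L_mul a b (PowerSeries.coeff (R := Aq) (k+1) (divHL f))
    unfold cf at hL
    rw [hL]
    rw [coeff_divHL, coeff_divHL]
    simp only [mon_apply0, mon_apply1]
    have ht := tele a b (fun m => PowerSeries.coeff (R := Aq) (k + 1 + m) f)
    unfold cf at ht
    simp only [add_zero] at ht
    rw [ht]
    rcases Nat.eq_zero_or_pos a with ha | ha
    · simp [ha]
    · have ha1 : 1 ≤ a := ha
      rw [if_pos ha1, if_pos ha1]
      have e1 : ∀ m ∈ Finset.range (a - 1 + 1),
          (-1:ℚ)^m * MvPowerSeries.coeff (R := ℚ)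
              (Finsupp.single (0:Fin 2) (a-1-m) + Finsupp.single 1 b)
              (PowerSeries.coeff (R := Aq) (k+1+1+m) f)
            = (-1:ℚ)^m * MvPowerSeries.coeff (R := ℚ)
              (Finsupp.single (0:Fin 2) (a-1-m) + Finsupp.single 1 b)
              (PowerSeries.coeff (R := Aq) (k+1+(m+1)) f) := by
        intro m _
        have hx : k+1+1+m = k+1+(m+1) := by omega
        rw [hx]
      rw [Finset.sum_congr rfl e1]
      ring

lemma CHL (x : Aq) (g : Bq) (h : PowerSeries.C (R := Aq) x = (Hb + Lb) * g) : x = 0 := by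
  have h0 : x = Lv * PowerSeries.coeff (R := Aq) 0 g := by
    have h' := congrArg (PowerSeries.coeff (R := Aq) 0) h
    rwa [PowerSeries.coeff_C, if_pos rfl, coeff_zero_HL_mul] at h'
  have hk : ∀ k, PowerSeries.coeff (R := Aq) k g = -(Lv * PowerSeries.coeff (R := Aq) (k+1) g) := by
    intro k
    have h' := congrArg (PowerSeries.coeff (R := Aq) (k+1)) h
    rw [PowerSeries.coeff_C, if_neg (Nat.succ_ne_zero k), coeff_succ_HL_mul] at h'
    linear_combination -h'
  have key : ∀ n, x = (-1:Aq)^n * (Lv^(n+1) * PowerSeries.coeff (R := Aq) n g) := by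
    intro n
    induction n with
    | zero => simpa using h0
    | succ n ih => rw [ih, hk n]; ring
  apply Aq_ext
  intro a b
  rw [key a]
  have hc : ((-1:Aq)^a) = MvPowerSeries.C (σ := Fin 2) (R := ℚ) ((-1:ℚ)^a) := by
    rw [map_pow, map_neg, map_one]
  rw [hc]
  unfold cf
  rw [MvPowerSeries.coeff_C_mul]
  have hLp := cf_Lpow_mul a b (a+1) (PowerSeries.coeff (R := Aq) a g)
  unfold cf at hLp
  rw [hLp, if_neg (by omega)]
  simp

lemma evL_spec {f : Bq} {a : Aq} {g : Bq}
    (h : f = PowerSeries.C (R := Aq) a + (Hb + Lb) * g) : evL f = a := by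
  have hd := decompHL f
  have hz : PowerSeries.C (R := Aq) (evL f - a) = (Hb + Lb) * (g - divHL f) := by
    rw [map_sub]
    linear_combination hd.symm.trans h
  have := CHL _ _ hz
  exact sub_eq_zero.mp this

lemma evL_C (a : Aq) : evL (PowerSeries.C (R := Aq) a) = a :=
  evL_spec (g := 0) (by ring)

lemma evL_zero : evL 0 = 0 := by
  have := evL_C 0
  rwa [map_zero] at this

lemma evL_one : evL 1 = 1 := by
  have := evL_C 1
  rwa [map_one] at this

lemma evL_add (f g : Bq) : evL (f + g) = evL f + evL g := by
  apply evL_spec (g := divHL f + divHL g)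
  rw [map_add]
  conv_lhs => rw [decompHL f, decompHL g]
  ring

lemma evL_mul (f g : Bq) : evL (f * g) = evL f * evL g := by
  apply evL_spec (g := divHL f * PowerSeries.C (R := Aq) (evL g)
    + PowerSeries.C (R := Aq) (evL f) * divHL g + (Hb + Lb) * (divHL f * divHL g))
  rw [map_mul]
  conv_lhs => rw [decompHL f, decompHL g]
  ring

/-- evaluation at `H = -L` as a ring homomorphism. -/
def evLh : Bq →+* Aq where
  toFun := evL
  map_one' := evL_one
  map_mul' := evL_mul
  map_zero' := evL_zero
  map_add' := evL_add

@[simp] lemma evLh_apply (f : Bq) : evLh f = evL f := rfl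

@[simp] lemma evLh_C (a : Aq) : evLh (PowerSeries.C (R := Aq) a) = a := evL_C a

@[simp] lemma evLh_Hb : evLh Hb = -Lv := by
  apply evL_spec (g := 1)
  rw [map_neg, mul_one, ← Lb]
  ring

@[simp] lemma evLh_Lb : evLh Lb = Lv := evL_C Lv

@[simp] lemma evLh_yb : evLh yb = yv := evL_C yv

lemma ev0_decomp (f : Bq) :
    PowerSeries.constantCoeff (R := Aq) f
      = evL f + Lv * PowerSeries.constantCoeff (R := Aq) (divHL f) := by
  conv_lhs => rw [decompHL f]
  rw [map_add, map_mul, map_add]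
  simp [Hb, Lb]

lemma cf_pushD5 (f : Bq) (a b : ℕ) :
    cf a b (pushD5 f)
      = ∑ k ∈ Finset.range (a + 1),
          (-1:ℚ)^k * (Nat.choose (k+2) 2 : ℚ) * cf (a - k) b (PowerSeries.coeff (R := Aq) (k+3) f) := by
  have h0 : cf a b (pushD5 f)
      = ∑ k ∈ Finset.range
          (((Finsupp.single (0:Fin 2) a + Finsupp.single 1 b : Fin 2 →₀ ℕ)) 0 + 1),
          (-1:ℚ)^k * (Nat.choose (k+2) 2 : ℚ) *
            MvPowerSeries.coeff (R := ℚ)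
              (Finsupp.single (0:Fin 2)
                (((Finsupp.single (0:Fin 2) a + Finsupp.single 1 b : Fin 2 →₀ ℕ)) 0 - k)
               + Finsupp.single 1
                (((Finsupp.single (0:Fin 2) a + Finsupp.single 1 b : Fin 2 →₀ ℕ)) 1))
              (PowerSeries.coeff (R := Aq) (k+3) f) := rfl
  rw [h0]
  simp only [mon_apply0, mon_apply1]

lemma ch2 (n : ℕ) : ((n+1).choose 2 : ℚ) * 2 = n * (n+1) := by
  induction n with
  | zero => simp
  | succ n ih =>
    rw [Nat.choose_succ_succ (n+1) 1]
    push_cast [Nat.choose_one_right]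
    push_cast at ih
    linarith

lemma coeffHL3 (g : Bq) (k : ℕ) :
    PowerSeries.coeff (R := Aq) (k+3) ((Hb+Lb)^3 * g)
      = PowerSeries.coeff (R := Aq) k g + (3:Aq) * (Lv * PowerSeries.coeff (R := Aq) (k+1) g)
        + (3:Aq) * (Lv^2 * PowerSeries.coeff (R := Aq) (k+2) g)
        + Lv^3 * PowerSeries.coeff (R := Aq) (k+3) g := by
  have hexp : (Hb+Lb)^3 * g
      = Hb^3*g + (3:Bq)*(Hb^2*(Lb*g)) + (3:Bq)*(Hb*(Lb^2*g)) + Lb^3*g := by ring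
  rw [hexp, map_add, map_add, map_add]
  have c3 : (3:Bq) = PowerSeries.C (R := Aq) (3:Aq) := (map_ofNat (PowerSeries.C (R := Aq)) 3).symm
  have cL : ∀ j : ℕ, (Lb:Bq)^j = PowerSeries.C (R := Aq) (Lv^j) := fun j => by rw [Lb, ← map_pow]
  rw [c3, PowerSeries.coeff_C_mul, PowerSeries.coeff_C_mul]
  rw [show (Hb:Bq)^3*g = PowerSeries.X^3*g from by rw [Hb]]
  rw [PowerSeries.coeff_X_pow_mul (g) 3 k]
  rw [show (Hb:Bq)^2*(Lb*g) = PowerSeries.X^2*(Lb*g) from by rw [Hb]]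
  rw [show (k+3) = (k+1)+2 from by omega]
  rw [PowerSeries.coeff_X_pow_mul (Lb*g) 2 (k+1)]
  rw [show (Hb:Bq)*(Lb^2*g) = PowerSeries.X^1*(Lb^2*g) from by rw [Hb, pow_one]]
  rw [show (k+1)+2 = (k+2)+1 from by omega]
  rw [PowerSeries.coeff_X_pow_mul (Lb^2*g) 1 (k+2)]
  rw [show (k+2)+1 = k+3 from by omega]
  rw [cL 2, cL 3, Lb, PowerSeries.coeff_C_mul, PowerSeries.coeff_C_mul, PowerSeries.coeff_C_mul]

lemma coeffA3 (e : Fin 2 →₀ ℕ) (x : Aq) :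
    MvPowerSeries.coeff (R := ℚ) e ((3:Aq) * x) = 3 * MvPowerSeries.coeff (R := ℚ) e x := by
  rw [show (3:Aq) = MvPowerSeries.C (σ := Fin 2) (R := ℚ) (3:ℚ) from (map_ofNat _ 3).symm,
    MvPowerSeries.coeff_C_mul]

theorem pushD5_HL3 (g : Bq) :
    pushD5 ((Hb+Lb)^3 * g) = PowerSeries.constantCoeff (R := Aq) g := by
  apply Aq_ext
  intro a b
  have hp := cf_pushD5 ((Hb+Lb)^3 * g) a b
  unfold cf at hp ⊢
  rw [hp]
  set U : ℕ → ℚ := fun m => if m ≤ a then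
    MvPowerSeries.coeff (R := ℚ) (Finsupp.single (0:Fin 2) (a-m) + Finsupp.single 1 b)
      (PowerSeries.coeff (R := Aq) m g) else 0 with hU
  have step1 : ∀ k ∈ Finset.range (a+1),
      (-1:ℚ)^k * (Nat.choose (k+2) 2 : ℚ) *
        MvPowerSeries.coeff (R := ℚ) (Finsupp.single (0:Fin 2) (a-k) + Finsupp.single 1 b)
          (PowerSeries.coeff (R := Aq) (k+3) ((Hb+Lb)^3*g))
        = (-1:ℚ)^k * (Nat.choose (k+2) 2 : ℚ) * (U k + 3*U (k+1) + 3*U (k+2) + U (k+3)) := by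
    intro k hk
    rw [Finset.mem_range] at hk
    have hka : k ≤ a := by omega
    congr 1
    rw [coeffHL3, map_add, map_add, map_add, coeffA3, coeffA3]
    have e1 := cf_Lpow_mul (a-k) b 1 (PowerSeries.coeff (R := Aq) (k+1) g)
    have e2 := cf_Lpow_mul (a-k) b 2 (PowerSeries.coeff (R := Aq) (k+2) g)
    have e3 := cf_Lpow_mul (a-k) b 3 (PowerSeries.coeff (R := Aq) (k+3) g)
    unfold cf at e1 e2 e3
    rw [pow_one] at e1
    rw [e1, e2, e3, hU]
    simp only []
    rw [if_pos hka]
    have u1 : (if 1 ≤ a - k then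
          MvPowerSeries.coeff (R := ℚ) (Finsupp.single (0:Fin 2) (a-k-1) + Finsupp.single 1 b)
            (PowerSeries.coeff (R := Aq) (k+1) g) else 0)
        = (if k+1 ≤ a then
          MvPowerSeries.coeff (R := ℚ) (Finsupp.single (0:Fin 2) (a-(k+1)) + Finsupp.single 1 b)
            (PowerSeries.coeff (R := Aq) (k+1) g) else 0) := by
      by_cases h : k+1 ≤ a
      · rw [if_pos (by omega), if_pos h, show a-k-1 = a-(k+1) from by omega]
      · rw [if_neg (by omega), if_neg h]
    have u2 : (if 2 ≤ a - k then
          MvPowerSeries.coeff (R := ℚ) (Finsupp.single (0:Fin 2) (a-k-2) + Finsupp.single 1 b)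
            (PowerSeries.coeff (R := Aq) (k+2) g) else 0)
        = (if k+2 ≤ a then
          MvPowerSeries.coeff (R := ℚ) (Finsupp.single (0:Fin 2) (a-(k+2)) + Finsupp.single 1 b)
            (PowerSeries.coeff (R := Aq) (k+2) g) else 0) := by
      by_cases h : k+2 ≤ a
      · rw [if_pos (by omega), if_pos h, show a-k-2 = a-(k+2) from by omega]
      · rw [if_neg (by omega), if_neg h]
    have u3 : (if 3 ≤ a - k then
          MvPowerSeries.coeff (R := ℚ) (Finsupp.single (0:Fin 2) (a-k-3) + Finsupp.single 1 b)
            (PowerSeries.coeff (R := Aq) (k+3) g) else 0)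
        = (if k+3 ≤ a then
          MvPowerSeries.coeff (R := ℚ) (Finsupp.single (0:Fin 2) (a-(k+3)) + Finsupp.single 1 b)
            (PowerSeries.coeff (R := Aq) (k+3) g) else 0) := by
      by_cases h : k+3 ≤ a
      · rw [if_pos (by omega), if_pos h, show a-k-3 = a-(k+3) from by omega]
      · rw [if_neg (by omega), if_neg h]
    rw [u1, u2, u3]
  rw [Finset.sum_congr rfl step1]
  set P : ℕ → ℚ := fun k => (-1:ℚ)^k * (((k+2).choose 2 : ℚ) * U k
    + (k:ℚ)*((k:ℚ)+2) * U (k+1) + ((k+1).choose 2 : ℚ) * U (k+2)) with hP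
  have key : ∀ k, (-1:ℚ)^k * ((k+2).choose 2 : ℚ) * (U k + 3*U (k+1) + 3*U (k+2) + U (k+3))
      = P k - P (k+1) := by
    intro k
    rw [hP]
    simp only []
    have c1 : ((k+1).choose 2 : ℚ) = (k:ℚ)*((k:ℚ)+1)/2 := by
      have := ch2 k; push_cast at this ⊢; linarith
    have c2 : ((k+2).choose 2 : ℚ) = ((k:ℚ)+1)*((k:ℚ)+2)/2 := by
      have := ch2 (k+1); push_cast at this ⊢; linarith
    have c3 : ((k+3).choose 2 : ℚ) = ((k:ℚ)+2)*((k:ℚ)+3)/2 := by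
      have := ch2 (k+2); push_cast at this ⊢; linarith
    rw [show ((k+1)+2) = k+3 from by omega, show ((k+1)+1) = k+2 from by omega]
    rw [c1, c2, c3]
    push_cast
    ring
  rw [Finset.sum_congr rfl (fun k _ => key k)]
  rw [Finset.sum_range_sub' P (a+1)]
  have hP0 : P 0 = U 0 := by
    rw [hP]
    norm_num [Nat.choose]
  have hPa : P (a+1) = 0 := by
    rw [hP, hU]
    simp only []
    rw [if_neg (by omega), if_neg (by omega), if_neg (by omega)]
    ring
  rw [hP0, hPa, hU]
  simp only []
  rw [if_pos (Nat.zero_le a), show a - 0 = a from by omega, sub_zero,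
    ← PowerSeries.coeff_zero_eq_constantCoeff]

theorem pushD5_HL2C (x : Aq) : pushD5 ((Hb+Lb)^2 * PowerSeries.C (R := Aq) x) = 0 := by
  apply Aq_ext
  intro a b
  have hp := cf_pushD5 ((Hb+Lb)^2 * PowerSeries.C (R := Aq) x) a b
  unfold cf at hp ⊢
  rw [hp, map_zero]
  apply Finset.sum_eq_zero
  intro k _
  have hz : PowerSeries.coeff (R := Aq) (k+3) ((Hb+Lb)^2 * PowerSeries.C (R := Aq) x) = 0 := by
    have hexp : (Hb+Lb)^2 * PowerSeries.C (R := Aq) x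
        = PowerSeries.X * (Hb*(PowerSeries.C (R := Aq) x) + (2:Bq)*(Lb*(PowerSeries.C (R := Aq) x)))
          + PowerSeries.C (R := Aq) (Lv^2 * x) := by
      rw [Hb, Lb, map_mul, map_pow]
      ring
    rw [hexp, map_add, show (k+3) = (k+2)+1 from by omega, PowerSeries.coeff_succ_X_mul,
      PowerSeries.coeff_C, if_neg (by omega), map_add]
    have c2 : (2:Bq) = PowerSeries.C (R := Aq) (2:Aq) := (map_ofNat (PowerSeries.C (R := Aq)) 2).symm
    rw [c2, PowerSeries.coeff_C_mul, Hb, show (k+2) = (k+1)+1 from by omega,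
      PowerSeries.coeff_succ_X_mul, PowerSeries.coeff_C, if_neg (by omega),
      Lb, PowerSeries.coeff_C_mul, PowerSeries.coeff_C, if_neg (by omega)]
    simp
  rw [hz, map_zero, mul_zero]

theorem pushD5_add (f g : Bq) : pushD5 (f + g) = pushD5 f + pushD5 g := by
  apply Aq_ext
  intro a b
  have hp1 := cf_pushD5 f a b
  have hp2 := cf_pushD5 g a b
  have hp3 := cf_pushD5 (f+g) a b
  unfold cf at hp1 hp2 hp3 ⊢
  rw [map_add, hp1, hp2, hp3, ← Finset.sum_add_distrib]
  apply Finset.sum_congr rfl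
  intro k _
  rw [map_add, map_add]
  ring

/-- The master pushforward formula. -/
theorem push_main (W : Bq) :
    Lv * pushD5 ((Hb+Lb)^2 * W)
      = PowerSeries.constantCoeff (R := Aq) W - evL W := by
  have hW := decompHL W
  have hD : (Hb+Lb)^2 * W
      = (Hb+Lb)^2 * PowerSeries.C (R := Aq) (evL W) + (Hb+Lb)^3 * divHL W := by
    conv_lhs => rw [hW]
    ring
  rw [hD, pushD5_add, pushD5_HL2C, pushD5_HL3, zero_add]
  rw [ev0_decomp W]
  ring

/-- `exp(cH)` as an explicit series. -/
def Exc (c : ℚ) : Bq :=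
  PowerSeries.mk fun k => MvPowerSeries.C (σ := Fin 2) (R := ℚ) (c^k * ((k.factorial : ℚ))⁻¹)

/-- `exp(cL)` as an explicit series. -/
def ser (c : ℚ) : Aq := fun e =>
  if e 1 = 0 then c^(e 0) * (((e 0).factorial : ℚ))⁻¹ else 0

lemma cf_expB (f : Bq) (k a b : ℕ) :
    cf a b (PowerSeries.coeff (R := Aq) k (expB f))
      = ∑ n ∈ Finset.range (k + a + b + 1),
          (n.factorial : ℚ)⁻¹ * cf a b (PowerSeries.coeff (R := Aq) k (f ^ n)) := by
  rw [expB]; erw [PowerSeries.coeff_mk]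
  have h0 : cf a b ((fun e => ∑ n ∈ Finset.range (k + e 0 + e 1 + 1),
        (n.factorial : ℚ)⁻¹ * MvPowerSeries.coeff (R := ℚ) e (PowerSeries.coeff (R := Aq) k (f ^ n)) : Aq))
      = ∑ n ∈ Finset.range
          (k + ((Finsupp.single (0:Fin 2) a + Finsupp.single 1 b : Fin 2 →₀ ℕ)) 0
             + ((Finsupp.single (0:Fin 2) a + Finsupp.single 1 b : Fin 2 →₀ ℕ)) 1 + 1),
          (n.factorial : ℚ)⁻¹ * cf a b (PowerSeries.coeff (R := Aq) k (f ^ n)) := rfl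
  rw [h0]
  simp only [mon_apply0, mon_apply1]

lemma cf_expA (f : Aq) (a b : ℕ) :
    cf a b (expA f)
      = ∑ n ∈ Finset.range (a + b + 1),
          (n.factorial : ℚ)⁻¹ * cf a b (f ^ n) := by
  have h0 : cf a b (expA f)
      = ∑ n ∈ Finset.range
          (((Finsupp.single (0:Fin 2) a + Finsupp.single 1 b : Fin 2 →₀ ℕ)) 0
             + ((Finsupp.single (0:Fin 2) a + Finsupp.single 1 b : Fin 2 →₀ ℕ)) 1 + 1),
          (n.factorial : ℚ)⁻¹ * cf a b (f ^ n) := rfl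
  rw [h0]
  simp only [mon_apply0, mon_apply1]

lemma cf_ser (c : ℚ) (a b : ℕ) :
    cf a b (ser c) = if b = 0 then c^a * ((a.factorial : ℚ))⁻¹ else 0 := by
  have h0 : cf a b (ser c)
      = if ((Finsupp.single (0:Fin 2) a + Finsupp.single 1 b : Fin 2 →₀ ℕ)) 1 = 0 then
          c^(((Finsupp.single (0:Fin 2) a + Finsupp.single 1 b : Fin 2 →₀ ℕ)) 0)
            * ((((Finsupp.single (0:Fin 2) a + Finsupp.single 1 b : Fin 2 →₀ ℕ)) 0).factorial : ℚ)⁻¹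
        else 0 := rfl
  rw [h0]
  simp only [mon_apply0, mon_apply1]

lemma mon_b0 (a : ℕ) :
    (Finsupp.single (0:Fin 2) a + Finsupp.single 1 0 : Fin 2 →₀ ℕ)
      = Finsupp.single (0:Fin 2) a := by
  rw [Finsupp.single_zero, add_zero]

lemma mon_eq_single (a b m : ℕ) :
    (Finsupp.single (0:Fin 2) a + Finsupp.single 1 b : Fin 2 →₀ ℕ)
        = Finsupp.single (0:Fin 2) m ↔ (a = m ∧ b = 0) := by
  constructor
  · intro h
    constructor
    · have h0 := mon_apply0 a b
      rw [h] at h0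
      simpa [Finsupp.single_apply] using h0.symm
    · have h1 := mon_apply1 a b
      rw [h] at h1
      simpa [Finsupp.single_apply] using h1.symm
  · rintro ⟨rfl, rfl⟩
    exact mon_b0 a

lemma coeff_Lv_pow (m : ℕ) (e : Fin 2 →₀ ℕ) :
    MvPowerSeries.coeff (R := ℚ) e (Lv ^ m) = if e = Finsupp.single (0:Fin 2) m then 1 else 0 := by
  rw [Lv, MvPowerSeries.coeff_X_pow]

lemma factorial_inv_choose (k a : ℕ) :
    (((k+a).factorial : ℚ))⁻¹ * ((k+a).choose k : ℚ) = ((k.factorial : ℚ))⁻¹ * ((a.factorial : ℚ))⁻¹ := by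
  have hn : ((k+a).choose k * k.factorial * a.factorial) = (k+a).factorial := by
    have := Nat.choose_mul_factorial_mul_factorial (Nat.le_add_right k a)
    simpa using this
  have hq : ((k+a).choose k : ℚ) * (k.factorial : ℚ) * (a.factorial : ℚ) = ((k+a).factorial : ℚ) := by
    exact_mod_cast congrArg (fun n : ℕ => (n : ℚ)) hn
  have f1 : (k.factorial : ℚ) ≠ 0 := Nat.cast_ne_zero.mpr (Nat.factorial_ne_zero k)
  have f2 : (a.factorial : ℚ) ≠ 0 := Nat.cast_ne_zero.mpr (Nat.factorial_ne_zero a)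
  have f3 : ((k+a).factorial : ℚ) ≠ 0 := Nat.cast_ne_zero.mpr (Nat.factorial_ne_zero (k+a))
  field_simp
  linarith [hq]

/-- `expA (c·L)` explicitly. -/
lemma expA_c (c : ℚ) : expA (MvPowerSeries.C (σ := Fin 2) (R := ℚ) c * Lv) = ser c := by
  apply Aq_ext
  intro a b
  rw [cf_expA, cf_ser]
  have hterm : ∀ n, cf a b ((MvPowerSeries.C (σ := Fin 2) (R := ℚ) c * Lv) ^ n)
      = c^n * (if (Finsupp.single (0:Fin 2) a + Finsupp.single 1 b : Fin 2 →₀ ℕ)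
          = Finsupp.single (0:Fin 2) n then 1 else 0) := by
    intro n
    rw [mul_pow, ← map_pow]
    unfold cf
    rw [MvPowerSeries.coeff_C_mul, coeff_Lv_pow]
  by_cases hb : b = 0
  · subst hb
    rw [if_pos rfl]
    rw [Finset.sum_eq_single a]
    · rw [hterm a, if_pos (by rw [mon_eq_single]; exact ⟨rfl, rfl⟩)]
      ring
    · intro n _ hn
      rw [hterm n, if_neg (by rw [mon_eq_single]; rintro ⟨rfl, -⟩; exact hn rfl)]
      ring
    · intro h
      exact absurd (Finset.mem_range.mpr (by omega)) h
  · rw [if_neg hb]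
    apply Finset.sum_eq_zero
    intro n _
    rw [hterm n, if_neg (by rw [mon_eq_single]; rintro ⟨-, h⟩; exact hb h)]
    ring

/-- `exp(cH)` explicitly. -/
lemma expB_cH (c : ℚ) :
    expB (PowerSeries.C (R := Aq) (MvPowerSeries.C (σ := Fin 2) (R := ℚ) c) * Hb) = Exc c := by
  refine PowerSeries.ext fun k => ?_
  apply Aq_ext
  intro a b
  rw [cf_expB]
  have hterm : ∀ n, cf a b (PowerSeries.coeff (R := Aq) k
        ((PowerSeries.C (R := Aq) (MvPowerSeries.C (σ := Fin 2) (R := ℚ) c) * Hb) ^ n))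
      = (if k = n then c^n * cf a b (1:Aq) else 0) := by
    intro n
    rw [mul_pow, ← map_pow, PowerSeries.coeff_C_mul, Hb, PowerSeries.coeff_X_pow]
    unfold cf
    rw [mul_ite, mul_one, mul_zero]
    by_cases h : k = n
    · rw [if_pos h, if_pos h, ← map_pow, MvPowerSeries.coeff_C, MvPowerSeries.coeff_one]
      split_ifs <;> ring
    · rw [if_neg h, if_neg h, map_zero]
  rw [Finset.sum_congr rfl (fun n _ => by rw [hterm n, mul_ite, mul_zero])]
  rw [Finset.sum_ite_eq (Finset.range (k+a+b+1)) k
    (fun n => (n.factorial : ℚ)⁻¹ * (c^n * cf a b (1:Aq)))]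
  rw [if_pos (Finset.mem_range.mpr (by omega))]
  rw [Exc, PowerSeries.coeff_mk]
  unfold cf
  rw [MvPowerSeries.coeff_C]
  rw [MvPowerSeries.coeff_one]
  split_ifs with h
  · ring
  · ring

lemma coeff_HLpow (n : ℕ) : ∀ k : ℕ,
    PowerSeries.coeff (R := Aq) k ((Hb+Lb)^n)
      = MvPowerSeries.C (σ := Fin 2) (R := ℚ) (n.choose k : ℚ) * Lv^(n-k) := by
  induction n with
  | zero =>
    intro k
    rcases k with _ | k
    · simp [PowerSeries.coeff_one]
    · simp [PowerSeries.coeff_one]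
  | succ n ih =>
    intro k
    rw [pow_succ']
    rcases k with _ | k
    · rw [coeff_zero_HL_mul, ih 0]
      simp only [Nat.choose_zero_right, Nat.cast_one, map_one, one_mul, Nat.sub_zero]
      rw [pow_succ]
      ring
    · rw [coeff_succ_HL_mul, ih k, ih (k+1)]
      rcases le_or_gt (k+1) n with h | h
      · rw [show (n+1).choose (k+1) = n.choose k + n.choose (k+1) from Nat.choose_succ_succ' n k]
        push_cast
        rw [show n - k = (n - (k+1)) + 1 from by omega, pow_succ, map_add]
        ring
      · rw [show (n+1).choose (k+1) = n.choose k + n.choose (k+1) from Nat.choose_succ_succ' n k]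
        rw [Nat.choose_eq_zero_of_lt (by omega : n < k+1)]
        push_cast
        simp [show n - k = 0 from by omega, show n - (k+1) = 0 from by omega]
  
lemma expB_cHL (c : ℚ) :
    expB (PowerSeries.C (R := Aq) (MvPowerSeries.C (σ := Fin 2) (R := ℚ) c) * (Hb + Lb))
      = Exc c * PowerSeries.C (R := Aq) (ser c) := by
  refine PowerSeries.ext fun k => ?_
  apply Aq_ext
  intro a b
  rw [cf_expB]
  have hterm : ∀ n, cf a b (PowerSeries.coeff (R := Aq) k
        ((PowerSeries.C (R := Aq) (MvPowerSeries.C (σ := Fin 2) (R := ℚ) c) * (Hb + Lb)) ^ n))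
      = c^n * (n.choose k : ℚ) *
          (if (Finsupp.single (0:Fin 2) a + Finsupp.single 1 b : Fin 2 →₀ ℕ)
            = Finsupp.single (0:Fin 2) (n-k) then 1 else 0) := by
    intro n
    rw [mul_pow, ← map_pow, PowerSeries.coeff_C_mul, coeff_HLpow n k]
    unfold cf
    rw [← map_pow, ← mul_assoc, ← map_mul, MvPowerSeries.coeff_C_mul, coeff_Lv_pow]
  rw [Finset.sum_congr rfl (fun n _ => by rw [hterm n])]
  have hrhs : cf a b (PowerSeries.coeff (R := Aq) k (Exc c * PowerSeries.C (R := Aq) (ser c)))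
      = c^k * ((k.factorial : ℚ))⁻¹ * (if b = 0 then c^a * ((a.factorial : ℚ))⁻¹ else 0) := by
    rw [PowerSeries.coeff_mul_C, Exc, PowerSeries.coeff_mk]
    have := cf_ser c a b
    unfold cf at this ⊢
    rw [MvPowerSeries.coeff_C_mul, this]
  rw [hrhs]
  by_cases hb : b = 0
  · subst hb
    rw [if_pos rfl]
    rw [Finset.sum_eq_single (k+a)]
    · rw [if_pos (by rw [mon_eq_single]; exact ⟨by omega, rfl⟩)]
      rw [mul_one, ← mul_assoc, mul_comm ((((k+a)).factorial : ℚ))⁻¹ (c^(k+a)), mul_assoc,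
        factorial_inv_choose k a, pow_add]
      ring
    · intro n _ hn
      rcases le_or_gt k n with h | h
      · rw [if_neg (by rw [mon_eq_single]; rintro ⟨h1, -⟩; exact hn (by omega)), mul_zero, mul_zero]
      · rw [Nat.choose_eq_zero_of_lt h]
        push_cast
        ring
    · intro hmem
      exact absurd (Finset.mem_range.mpr (by omega)) hmem
  · rw [if_neg hb]
    rw [Finset.sum_eq_zero, mul_zero]
    intro n _
    rw [if_neg (by rw [mon_eq_single]; rintro ⟨-, h⟩; exact hb h), mul_zero, mul_zero]

lemma ser_mul (c c' : ℚ) : ser c * ser c' = ser (c + c') := by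
  apply Aq_ext
  intro a b
  have hL : cf a b (ser c * ser c')
      = ∑ p ∈ Finset.HasAntidiagonal.antidiagonal
          (Finsupp.single (0:Fin 2) a + Finsupp.single 1 b : Fin 2 →₀ ℕ),
          MvPowerSeries.coeff (R := ℚ) p.1 (ser c) * MvPowerSeries.coeff (R := ℚ) p.2 (ser c') := by
    unfold cf
    rw [MvPowerSeries.coeff_mul]
  rw [hL, cf_ser]
  by_cases hb : b = 0
  · subst hb
    rw [if_pos rfl, mon_b0, Finsupp.antidiagonal_single, Finset.sum_map]
    have hterm : ∀ p : ℕ × ℕ,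
        MvPowerSeries.coeff (R := ℚ) (Finsupp.single (0:Fin 2) p.1) (ser c)
          * MvPowerSeries.coeff (R := ℚ) (Finsupp.single (0:Fin 2) p.2) (ser c')
        = (c^p.1 * ((p.1.factorial : ℚ))⁻¹) * (c'^p.2 * ((p.2.factorial : ℚ))⁻¹) := by
      intro p
      have e1 : MvPowerSeries.coeff (R := ℚ) (Finsupp.single (0:Fin 2) p.1) (ser c)
          = c^p.1 * ((p.1.factorial : ℚ))⁻¹ := by
        show ser c (Finsupp.single (0:Fin 2) p.1) = _
        rw [ser]
        simp [Finsupp.single_apply]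
      have e2 : MvPowerSeries.coeff (R := ℚ) (Finsupp.single (0:Fin 2) p.2) (ser c')
          = c'^p.2 * ((p.2.factorial : ℚ))⁻¹ := by
        show ser c' (Finsupp.single (0:Fin 2) p.2) = _
        rw [ser]
        simp [Finsupp.single_apply]
      rw [e1, e2]
    have : ∀ p ∈ Finset.HasAntidiagonal.antidiagonal a,
        (MvPowerSeries.coeff (R := ℚ) ((Function.Embedding.prodMap
            ⟨_, Finsupp.single_injective (0:Fin 2)⟩
            ⟨_, Finsupp.single_injective (0:Fin 2)⟩) p).1 (ser c))
          * (MvPowerSeries.coeff (R := ℚ) ((Function.Embedding.prodMap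
            ⟨_, Finsupp.single_injective (0:Fin 2)⟩
            ⟨_, Finsupp.single_injective (0:Fin 2)⟩) p).2 (ser c'))
        = (c^p.1 * ((p.1.factorial : ℚ))⁻¹) * (c'^p.2 * ((p.2.factorial : ℚ))⁻¹) := by
      intro p _
      exact hterm p
    rw [Finset.sum_congr rfl this]
    rw [Finset.Nat.sum_antidiagonal_eq_sum_range_succ
      (fun i j => (c^i * ((i.factorial : ℚ))⁻¹) * (c'^j * ((j.factorial : ℚ))⁻¹)) a]
    rw [add_pow]
    rw [Finset.sum_mul]
    apply Finset.sum_congr rfl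
    intro i hi
    rw [Finset.mem_range] at hi
    have hia : i ≤ a := by omega
    have key : ((a.factorial : ℚ))⁻¹ * (a.choose i : ℚ)
        = ((i.factorial : ℚ))⁻¹ * (((a-i).factorial : ℚ))⁻¹ := by
      have := factorial_inv_choose i (a - i)
      rw [show i + (a - i) = a from by omega] at this
      rw [this]
    calc c^i * ((i.factorial:ℚ))⁻¹ * (c'^(a-i) * (((a-i).factorial:ℚ))⁻¹)
        = (((i.factorial:ℚ))⁻¹ * (((a-i).factorial:ℚ))⁻¹) * (c^i * c'^(a-i)) := by ring
      _ = (((a.factorial:ℚ))⁻¹ * (a.choose i : ℚ)) * (c^i * c'^(a-i)) := by rw [key]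
      _ = c^i * c'^(a-i) * (a.choose i : ℚ) * ((a.factorial:ℚ))⁻¹ := by ring
  · rw [if_neg hb]
    apply Finset.sum_eq_zero
    intro p hp
    rw [Finset.HasAntidiagonal.mem_antidiagonal] at hp
    have hsum : p.1 1 + p.2 1 = b := by
      have := congrFun (congrArg (fun f : Fin 2 →₀ ℕ => (f : Fin 2 → ℕ)) hp) 1
      simpa using this
    by_cases h1 : p.1 1 = 0
    · have h2 : p.2 1 ≠ 0 := by omega
      have : MvPowerSeries.coeff (R := ℚ) p.2 (ser c') = 0 := by
        show ser c' p.2 = 0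
        rw [ser, if_neg h2]
      rw [this, mul_zero]
    · have : MvPowerSeries.coeff (R := ℚ) p.1 (ser c) = 0 := by
        show ser c p.1 = 0
        rw [ser, if_neg h1]
      rw [this, zero_mul]

lemma Exc_mul (c c' : ℚ) : Exc c * Exc c' = Exc (c + c') := by
  refine PowerSeries.ext fun k => ?_
  rw [PowerSeries.coeff_mul]
  simp only [Exc, PowerSeries.coeff_mk]
  rw [Finset.sum_congr rfl
    (fun p _ => (map_mul (MvPowerSeries.C (σ := Fin 2) (R := ℚ))
      (c^p.1 * ((p.1.factorial : ℚ))⁻¹) (c'^p.2 * ((p.2.factorial : ℚ))⁻¹)).symm),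
    ← map_sum]
  congr 1
  rw [Finset.Nat.sum_antidiagonal_eq_sum_range_succ
    (fun i j => c^i * ((i.factorial : ℚ))⁻¹ * (c'^j * ((j.factorial : ℚ))⁻¹)) k]
  rw [add_pow, Finset.sum_mul]
  apply Finset.sum_congr rfl
  intro i hi
  rw [Finset.mem_range] at hi
  have key : ((k.factorial : ℚ))⁻¹ * (k.choose i : ℚ)
      = ((i.factorial : ℚ))⁻¹ * (((k-i).factorial : ℚ))⁻¹ := by
    have := factorial_inv_choose i (k - i)
    rw [show i + (k - i) = k from by omega] at this
    rw [this]
  calc c^i * ((i.factorial:ℚ))⁻¹ * (c'^(k-i) * (((k-i).factorial:ℚ))⁻¹)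
      = (((i.factorial:ℚ))⁻¹ * (((k-i).factorial:ℚ))⁻¹) * (c^i * c'^(k-i)) := by ring
    _ = (((k.factorial:ℚ))⁻¹ * (k.choose i : ℚ)) * (c^i * c'^(k-i)) := by rw [key]
    _ = c^i * c'^(k-i) * (k.choose i : ℚ) * ((k.factorial:ℚ))⁻¹ := by ring

lemma evL_sub (f g : Bq) : evL (f - g) = evL f - evL g := map_sub evLh f g

lemma evL_pow (f : Bq) (n : ℕ) : evL (f ^ n) = (evL f) ^ n := map_pow evLh f n

lemma expB_negH : expB (-Hb) = Exc (-1) := by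
  rw [show -Hb = PowerSeries.C (R := Aq) (MvPowerSeries.C (σ := Fin 2) (R := ℚ) (-1)) * Hb from by
    rw [map_neg, map_one, map_neg, map_one, neg_one_mul]]
  exact expB_cH (-1)

lemma expA_negL : expA (-Lv) = ser (-1) := by
  rw [show -Lv = MvPowerSeries.C (σ := Fin 2) (R := ℚ) (-1) * Lv from by
    rw [map_neg, map_one, neg_one_mul]]
  exact expA_c (-1)

lemma expB_negHL : expB (-(Hb + Lb)) = Exc (-1) * PowerSeries.C (R := Aq) (ser (-1)) := by
  rw [show -(Hb + Lb) = PowerSeries.C (R := Aq) (MvPowerSeries.C (σ := Fin 2) (R := ℚ) (-1)) * (Hb + Lb) from by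
    rw [map_neg, map_one, map_neg, map_one, neg_one_mul]]
  exact expB_cHL (-1)

lemma expB_negHL2 : expB (-(2*Hb + 2*Lb)) = Exc (-2) * PowerSeries.C (R := Aq) (ser (-2)) := by
  rw [show -(2*Hb + 2*Lb) = PowerSeries.C (R := Aq) (MvPowerSeries.C (σ := Fin 2) (R := ℚ) (-2)) * (Hb + Lb) from by
    rw [map_neg, map_ofNat, map_neg, map_ofNat]; ring]
  exact expB_cHL (-2)

/-- The statement's `e^{-(H+L)}` equals `e^{-H}·e^{-L}`. -/
lemma z_eq_xU :
    expB (-(Hb + Lb)) = expB (-Hb) * PowerSeries.C (R := Aq) (expA (-Lv)) := by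
  rw [expB_negHL, expB_negH, expA_negL]

/-- The statement's `e^{-(2H+2L)}` equals `(e^{-(H+L)})²`. -/
lemma X2_eq_z_sq :
    expB (-(2*Hb + 2*Lb)) = (expB (-(Hb + Lb)))^2 := by
  rw [expB_negHL2, expB_negHL, mul_pow, ← map_pow]
  rw [show Exc (-1) ^ 2 = Exc (-1) * Exc (-1) from sq (Exc (-1)),
    show ser (-1) ^ 2 = ser (-1) * ser (-1) from sq (ser (-1)),
    Exc_mul, ser_mul]
  norm_num

lemma constantCoeff_Exc (c : ℚ) :
    PowerSeries.constantCoeff (R := Aq) (Exc c) = 1 := by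
  rw [← PowerSeries.coeff_zero_eq_constantCoeff, Exc, PowerSeries.coeff_mk]
  norm_num

lemma constantCoeff_x : PowerSeries.constantCoeff (R := Aq) (expB (-Hb)) = 1 := by
  rw [expB_negH, constantCoeff_Exc]

lemma constantCoeff_z :
    PowerSeries.constantCoeff (R := Aq) (expB (-(Hb + Lb))) = expA (-Lv) := by
  rw [z_eq_xU, map_mul, constantCoeff_x, PowerSeries.constantCoeff_C, one_mul]

lemma deriv_Exc (c : ℚ) :
    PowerSeries.derivative Aq (Exc c)
      = PowerSeries.C (R := Aq) (MvPowerSeries.C (σ := Fin 2) (R := ℚ) c) * Exc c := by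
  refine PowerSeries.ext fun k => ?_
  rw [PowerSeries.coeff_derivative, PowerSeries.coeff_C_mul, Exc,
    PowerSeries.coeff_mk, PowerSeries.coeff_mk]
  have hcast : ((k:Aq) + 1) = MvPowerSeries.C (σ := Fin 2) (R := ℚ) ((k:ℚ)+1) := by
    rw [map_add, map_natCast, map_one]
  rw [hcast, ← map_mul, ← map_mul]
  congr 1
  rw [Nat.factorial_succ]
  have h1 : ((k:ℚ) + 1) ≠ 0 := by positivity
  have h2 : ((k.factorial : ℚ)) ≠ 0 := Nat.cast_ne_zero.mpr (Nat.factorial_ne_zero k)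
  push_cast
  field_simp
  ring

lemma deriv_z :
    PowerSeries.derivative Aq (expB (-(Hb + Lb)))
      = PowerSeries.C (R := Aq) (MvPowerSeries.C (σ := Fin 2) (R := ℚ) (-1)) * expB (-(Hb + Lb)) := by
  rw [expB_negHL, Derivation.leibniz, PowerSeries.derivative_C, smul_zero, zero_add,
    deriv_Exc, smul_eq_mul]
  ring

lemma evL_z (v : Bq) (hv : 1 - expB (-(Hb + Lb)) = (Hb + Lb) * v) :
    evL (expB (-(Hb + Lb))) = 1 := by
  have h := congrArg evL hv
  rw [evL_sub, evL_one, evL_mul, evL_add] at h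
  have hH : evL Hb = -Lv := evLh_Hb
  have hL : evL Lb = Lv := evLh_Lb
  rw [hH, hL] at h
  rw [neg_add_cancel, zero_mul] at h
  linear_combination -h

lemma evL_v (v : Bq) (hv : 1 - expB (-(Hb + Lb)) = (Hb + Lb) * v) :
    evL v = 1 := by
  have hd := congrArg (fun f => PowerSeries.derivative Aq f) hv
  simp only [map_sub] at hd
  rw [show PowerSeries.derivative Aq (1 : Bq) = 0 from Derivation.map_one_eq_zero _] at hd
  rw [deriv_z] at hd
  rw [Derivation.leibniz] at hd
  have hHL : PowerSeries.derivative Aq (Hb + Lb) = 1 := by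
    rw [map_add, Hb, Lb, PowerSeries.derivative_X, PowerSeries.derivative_C, add_zero]
  rw [hHL, smul_eq_mul, smul_eq_mul, mul_one] at hd
  have h2 := congrArg evL hd
  rw [evL_sub, evL_zero, evL_mul, evL_add, evL_mul, evL_add] at h2
  have hH : evL Hb = -Lv := evLh_Hb
  have hL : evL Lb = Lv := evLh_Lb
  rw [hH, hL, neg_add_cancel, zero_mul] at h2
  have h3 : evL (PowerSeries.C (R := Aq) (MvPowerSeries.C (σ := Fin 2) (R := ℚ) (-1)))
      = MvPowerSeries.C (σ := Fin 2) (R := ℚ) (-1) := evL_C _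
  rw [h3, evL_z v hv] at h2
  have h4 : MvPowerSeries.C (σ := Fin 2) (R := ℚ) (-1) = -1 := by rw [map_neg, map_one]
  rw [h4] at h2
  linear_combination -h2

lemma Lv_ne_zero : Lv ≠ 0 := by
  intro h
  have h1 : MvPowerSeries.coeff (R := ℚ) (Finsupp.single (0:Fin 2) 1) Lv = 1 := by
    rw [Lv, ← pow_one (MvPowerSeries.X (0:Fin 2) : Aq), MvPowerSeries.coeff_X_pow, if_pos rfl]
  rw [h, map_zero] at h1
  exact (by norm_num : (0:ℚ) ≠ 1) h1

lemma constantCoeff_u (u : Bq) (hu : 1 - expB (-Hb) = Hb * u) :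
    PowerSeries.constantCoeff (R := Aq) u = 1 := by
  have h := congrArg (PowerSeries.coeff (R := Aq) 1) hu
  rw [expB_negH] at h
  rw [map_sub, PowerSeries.coeff_one, if_neg (by norm_num : (1:ℕ) ≠ 0), Exc,
    PowerSeries.coeff_mk] at h
  rw [Hb, show (1:ℕ) = 0 + 1 from rfl, PowerSeries.coeff_succ_X_mul,
    PowerSeries.coeff_zero_eq_constantCoeff] at h
  rw [← h]
  have hval : (-1:ℚ)^(0+1) * (((0+1 : ℕ).factorial : ℚ))⁻¹ = -1 := by norm_num
  rw [hval, map_neg, map_one]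
  ring


/-- **the `D₅` pushforward computation `π_*(D) = Q`.**
In `ℚ⟦H,L,y⟧` let
`D := (1 + y e^{-H})(1 + y e^{-H-L})³ (1+y)⁻¹ ((1 + y e^{-2H-2L})⁻¹)²
      · [H(H+L)³/((1-e^{-H})(1-e^{-H-L})³)] · (1 - e^{-2H-2L})²`,
where the bracketed factor is `u⁻¹ v⁻³` for the units `u, v` with
`1 - e^{-H} = H·u` and `1 - e^{-(H+L)} = (H+L)·v`.  Then
`π_*(D) = 4 - y + (1+y)(yU-3)(1+yU²)⁻¹ - U(1+y)²((1+yU²)⁻¹)²` where `U = exp(-L)`.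
All inverses are specified by explicit unit equations. -/
theorem statement8 (u uinv v vinv pinv winv : Bq) (qinv : Aq)
    (hu : 1 - expB (-Hb) = Hb * u)
    (hu1 : u * uinv = 1)
    (hv : 1 - expB (-(Hb + Lb)) = (Hb + Lb) * v)
    (hv1 : v * vinv = 1)
    (hp : (1 + yb) * pinv = 1)
    (hw : (1 + yb * expB (-(2 * Hb + 2 * Lb))) * winv = 1)
    (hq : (1 + yv * (expA (-Lv)) ^ 2) * qinv = 1) :
    letI D : Bq :=
      (1 + yb * expB (-Hb)) * (1 + yb * expB (-(Hb + Lb))) ^ 3 * pinv * winv ^ 2 *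
        (uinv * vinv ^ 3) * (1 - expB (-(2 * Hb + 2 * Lb))) ^ 2
    letI U : Aq := expA (-Lv)
    pushD5 D =
      4 - yv + (1 + yv) * (yv * U - 3) * qinv - U * (1 + yv) ^ 2 * qinv ^ 2 := by
  show pushD5 ((1 + yb * expB (-Hb)) * (1 + yb * expB (-(Hb + Lb))) ^ 3 * pinv * winv ^ 2 *
        (uinv * vinv ^ 3) * (1 - expB (-(2 * Hb + 2 * Lb))) ^ 2)
      = 4 - yv + (1 + yv) * (yv * expA (-Lv) - 3) * qinv
          - expA (-Lv) * (1 + yv) ^ 2 * qinv ^ 2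
  have hD : (1 + yb * expB (-Hb)) * (1 + yb * expB (-(Hb + Lb))) ^ 3 * pinv * winv ^ 2 *
        (uinv * vinv ^ 3) * (1 - expB (-(2 * Hb + 2 * Lb))) ^ 2
      = (Hb + Lb)^2 * (uinv * vinv * ((1 + yb * expB (-Hb)) * (1 + yb * expB (-(Hb + Lb))) ^ 3
          * pinv * winv ^ 2 * (1 + expB (-(Hb + Lb))) ^ 2)) := by
    rw [X2_eq_z_sq]
    linear_combination
      (uinv * ((1 + yb * expB (-Hb)) * (1 + yb * expB (-(Hb + Lb))) ^ 3 * pinv * winv ^ 2)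
        * (1 + expB (-(Hb + Lb)))^2 * vinv^3
        * (2*(Hb+Lb)*v + (1 - expB (-(Hb + Lb)) - (Hb+Lb)*v))) * hv
      + (uinv * ((1 + yb * expB (-Hb)) * (1 + yb * expB (-(Hb + Lb))) ^ 3 * pinv * winv ^ 2)
        * (1 + expB (-(Hb + Lb)))^2 * (Hb+Lb)^2 * vinv * (v*vinv + 1)) * hv1
  rw [hD]
  apply mul_left_cancel₀ Lv_ne_zero
  rw [push_main]
  -- value lemmas
  have hybc : PowerSeries.constantCoeff (R := Aq) yb = yv := by rw [yb, PowerSeries.constantCoeff_C]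
  have hybL : evL yb = yv := by rw [yb]; exact evL_C yv
  have hcx : PowerSeries.constantCoeff (R := Aq) (expB (-Hb)) = 1 := constantCoeff_x
  have hcz : PowerSeries.constantCoeff (R := Aq) (expB (-(Hb + Lb))) = expA (-Lv) := constantCoeff_z
  have hcu : PowerSeries.constantCoeff (R := Aq) u = 1 := constantCoeff_u u hu
  have hcuinv : PowerSeries.constantCoeff (R := Aq) uinv = 1 := by
    have h := congrArg (PowerSeries.constantCoeff (R := Aq)) hu1
    rw [map_mul, map_one, hcu, one_mul] at h
    exact h
  have hR1 : Lv * PowerSeries.constantCoeff (R := Aq) v = 1 - expA (-Lv) := by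
    have h := congrArg (PowerSeries.constantCoeff (R := Aq)) hv
    rw [map_sub, map_one, map_mul, map_add, hcz] at h
    rw [show PowerSeries.constantCoeff (R := Aq) Hb = 0 from by rw [Hb]; exact PowerSeries.constantCoeff_X] at h
    rw [show PowerSeries.constantCoeff (R := Aq) Lb = Lv from by rw [Lb]; exact PowerSeries.constantCoeff_C _] at h
    linear_combination -h
  have hR2 : PowerSeries.constantCoeff (R := Aq) v * PowerSeries.constantCoeff (R := Aq) vinv = 1 := by
    have h := congrArg (PowerSeries.constantCoeff (R := Aq)) hv1
    rwa [map_mul, map_one] at h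
  have hR6 : (1 + yv) * PowerSeries.constantCoeff (R := Aq) pinv = 1 := by
    have h := congrArg (PowerSeries.constantCoeff (R := Aq)) hp
    rwa [map_mul, map_add, map_one, hybc] at h
  have hcX2 : PowerSeries.constantCoeff (R := Aq) (expB (-(2 * Hb + 2 * Lb))) = (expA (-Lv))^2 := by
    rw [X2_eq_z_sq, map_pow, hcz]
  have hR7 : (1 + yv * (expA (-Lv))^2) * PowerSeries.constantCoeff (R := Aq) winv = 1 := by
    have h := congrArg (PowerSeries.constantCoeff (R := Aq)) hw
    rwa [map_mul, map_add, map_one, map_mul, hybc, hcX2] at h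
  have hT : evL (expB (-(Hb + Lb))) = 1 := evL_z v hv
  have hvL : evL v = 1 := evL_v v hv
  have hvinvL : evL vinv = 1 := by
    have h := congrArg evL hv1
    rwa [evL_mul, evL_one, hvL, one_mul] at h
  have hR5 : evL (expB (-Hb)) * expA (-Lv) = 1 := by
    have h := congrArg evL z_eq_xU
    rw [hT, evL_mul, evL_C] at h
    linear_combination -h
  have hR3 : 1 - evL (expB (-Hb)) = -Lv * evL u := by
    have h := congrArg evL hu
    rw [evL_sub, evL_one, evL_mul] at h
    rw [show evL Hb = -Lv from evLh_Hb] at h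
    exact h
  have hR4 : evL u * evL uinv = 1 := by
    have h := congrArg evL hu1
    rwa [evL_mul, evL_one] at h
  have hR6L : (1 + yv) * evL pinv = 1 := by
    have h := congrArg evL hp
    rwa [evL_mul, evL_add, evL_one, hybL] at h
  have hX2L : evL (expB (-(2 * Hb + 2 * Lb))) = 1 := by
    rw [X2_eq_z_sq, evL_pow, hT, one_pow]
  have hR8 : (1 + yv) * evL winv = 1 := by
    have h := congrArg evL hw
    rwa [evL_mul, evL_add, evL_one, evL_mul, hybL, hX2L, mul_one] at h
  -- substitutions
  have A1 : PowerSeries.constantCoeff (R := Aq) winv = qinv := by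
    linear_combination qinv * hR7 - (PowerSeries.constantCoeff (R := Aq) winv) * hq
  have A2 : evL pinv = PowerSeries.constantCoeff (R := Aq) pinv := by
    linear_combination (PowerSeries.constantCoeff (R := Aq) pinv) * hR6L - (evL pinv) * hR6
  have A3 : evL winv = PowerSeries.constantCoeff (R := Aq) pinv := by
    linear_combination (PowerSeries.constantCoeff (R := Aq) pinv) * hR8 - (evL winv) * hR6
  have A4 : Lv * (expA (-Lv) * evL u) = Lv * PowerSeries.constantCoeff (R := Aq) v := by
    linear_combination (expA (-Lv)) * hR3 + hR5 - hR1
  have A5 : expA (-Lv) * evL u = PowerSeries.constantCoeff (R := Aq) v :=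
    mul_left_cancel₀ Lv_ne_zero A4
  have A6 : evL uinv = expA (-Lv) * PowerSeries.constantCoeff (R := Aq) vinv := by
    linear_combination (-(PowerSeries.constantCoeff (R := Aq) vinv * evL uinv)) * A5
      + (expA (-Lv) * PowerSeries.constantCoeff (R := Aq) vinv) * hR4
      + (-(evL uinv)) * hR2
  have A7 : (1 + yv)^3 * (PowerSeries.constantCoeff (R := Aq) pinv)^3 = 1 := by
    linear_combination (((1+yv) * PowerSeries.constantCoeff (R := Aq) pinv)^2
      + (1+yv) * PowerSeries.constantCoeff (R := Aq) pinv + 1) * hR6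
  have A8 : (1 + yv * expA (-Lv))^3 * qinv^2 * (1 + expA (-Lv))^2
        - 4*(expA (-Lv) + yv)
      = (1 - expA (-Lv)) * (4 - yv + (1 + yv) * (yv * expA (-Lv) - 3) * qinv
          - expA (-Lv) * (1 + yv) ^ 2 * qinv ^ 2) := by
    linear_combination ((1 - expA (-Lv)) * (1 + yv) * (yv * expA (-Lv) - 3) * qinv
      + (4*(expA (-Lv) + yv) + (1 - expA (-Lv))*(4 - yv))
        * ((1 + yv * (expA (-Lv))^2) * qinv + 1)) * hq
  have A9 : Lv = (1 - expA (-Lv)) * PowerSeries.constantCoeff (R := Aq) vinv := by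
    linear_combination (PowerSeries.constantCoeff (R := Aq) vinv) * hR1 - Lv * hR2
  -- evaluate both sides
  simp only [map_mul, map_add, map_pow, map_one, evL_mul, evL_add, evL_pow, evL_one,
    hybc, hybL, hcx, hcz, hcuinv, hvinvL, hT]
  rw [A1, A2, A3, A6]
  linear_combination
    (PowerSeries.constantCoeff (R := Aq) vinv * (1 + yv * expA (-Lv))^3 * qinv^2
      * (1 + expA (-Lv))^2) * hR6
    - (4 * expA (-Lv) * PowerSeries.constantCoeff (R := Aq) vinv
        * (1 + yv * evL (expB (-Hb)))) * A7
    - (4 * PowerSeries.constantCoeff (R := Aq) vinv * yv) * hR5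
    + (PowerSeries.constantCoeff (R := Aq) vinv) * A8
    - (4 - yv + (1 + yv) * (yv * expA (-Lv) - 3) * qinv
        - expA (-Lv) * (1 + yv) ^ 2 * qinv ^ 2) * A9

end
end
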